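/- arXiv:1811.10518 — 2 statements merged into one kernel-verified Lean document; each statement's English description precedes it below -/
import Mathlib

section
/- Let M, N be subspaces of ℂ^n with orthogonal projections P_M, P_N, let θ₁ be the Dixmier angle between M and N and η₁ the Dixmier angle between M^⊥ and N^⊥. Then for every x ∈ ℂ^n: 2‖x‖² sin²(η₁/2) ≤ ‖P_M x‖² + ‖P_N x‖² ≤ 2‖x‖² cos²(θ₁/2). -/
open scoped ComplexInnerProductSpace

/-- The orthogonal projection onto a subspace `K` of `ℂⁿ`, as an operator on `ℂⁿ`. -/
noncomputable def projCLM {n : ℕ} (K : Submodule ℂ (EuclideanSpace ℂ (Fin n))) :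
    EuclideanSpace ℂ (Fin n) →L[ℂ] EuclideanSpace ℂ (Fin n) :=
  K.subtypeL.comp K.orthogonalProjectionOnto

/-- The Dixmier-angle supremum bounds inner products of members of `M` and `N`. -/
lemma dixmier_inner_bound {n : ℕ} (M N : Submodule ℂ (EuclideanSpace ℂ (Fin n))) (c : ℝ)
    (hc : 0 ≤ c)
    (hcos : c = sSup {r : ℝ | ∃ u ∈ M, ∃ v ∈ N,
      ‖u‖ = 1 ∧ ‖v‖ = 1 ∧ ‖⟪u, v⟫‖ = r}) :
    ∀ u ∈ M, ∀ v ∈ N, ‖⟪u, v⟫‖ ≤ c * (‖u‖ * ‖v‖) := by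
  intro u hu v hv
  by_cases hu0 : u = 0
  · simp only [hu0, inner_zero_left, norm_zero]
    positivity
  by_cases hv0 : v = 0
  · simp only [hv0, inner_zero_right, norm_zero]
    positivity
  have hun : (0:ℝ) < ‖u‖ := norm_pos_iff.2 hu0
  have hvn : (0:ℝ) < ‖v‖ := norm_pos_iff.2 hv0
  set u' : EuclideanSpace ℂ (Fin n) := ((‖u‖:ℂ)⁻¹) • u with hu'
  set v' : EuclideanSpace ℂ (Fin n) := ((‖v‖:ℂ)⁻¹) • v with hv'
  have hu'M : u' ∈ M := M.smul_mem _ hu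
  have hv'N : v' ∈ N := N.smul_mem _ hv
  have hu'norm : ‖u'‖ = 1 := by
    rw [hu', norm_smul]
    simp [hun.ne']
  have hv'norm : ‖v'‖ = 1 := by
    rw [hv', norm_smul]
    simp [hvn.ne']
  have hmem : ‖⟪u', v'⟫‖ ∈ {r : ℝ | ∃ u ∈ M, ∃ v ∈ N,
      ‖u‖ = 1 ∧ ‖v‖ = 1 ∧ ‖⟪u, v⟫‖ = r} :=
    ⟨u', hu'M, v', hv'N, hu'norm, hv'norm, rfl⟩
  have hbdd : BddAbove {r : ℝ | ∃ u ∈ M, ∃ v ∈ N,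
      ‖u‖ = 1 ∧ ‖v‖ = 1 ∧ ‖⟪u, v⟫‖ = r} := by
    refine ⟨1, ?_⟩
    rintro r ⟨a, _, b, _, ha1, hb1, rfl⟩
    calc ‖⟪a, b⟫‖ = ‖⟪a, b⟫‖ := rfl
    _ ≤ ‖a‖ * ‖b‖ := norm_inner_le_norm a b
    _ = 1 := by rw [ha1, hb1, one_mul]
  have hle : ‖⟪u', v'⟫‖ ≤ c := hcos ▸ le_csSup hbdd hmem
  have hinner : ⟪u', v'⟫ = (starRingEnd ℂ) ((‖u‖:ℂ)⁻¹) * ((‖v‖:ℂ)⁻¹ * ⟪u, v⟫) := by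
    rw [hu', hv', inner_smul_left, inner_smul_right]
  have habs : ‖⟪u', v'⟫‖ = ‖u‖⁻¹ * (‖v‖⁻¹ * ‖⟪u, v⟫‖) := by
    rw [hinner, norm_mul, norm_mul]
    simp [hun.le, hvn.le]
  rw [habs] at hle
  have := mul_le_mul_of_nonneg_left hle (by positivity : (0:ℝ) ≤ ‖u‖ * ‖v‖)
  calc ‖⟪u, v⟫‖ = (‖u‖ * ‖v‖) * (‖u‖⁻¹ * (‖v‖⁻¹ * ‖⟪u, v⟫‖)) := by
        field_simp
    _ ≤ (‖u‖ * ‖v‖) * c := this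
    _ = c * (‖u‖ * ‖v‖) := by ring

/-- Key upper bound: `‖P_M x‖² + ‖P_N x‖² ≤ (1 + c)‖x‖²` when the Dixmier
angle supremum of `M`, `N` equals `c`. -/
lemma sum_sq_le_one_add {n : ℕ} (M N : Submodule ℂ (EuclideanSpace ℂ (Fin n))) (c : ℝ)
    (hc : 0 ≤ c)
    (hcos : c = sSup {r : ℝ | ∃ u ∈ M, ∃ v ∈ N,
      ‖u‖ = 1 ∧ ‖v‖ = 1 ∧ ‖⟪u, v⟫‖ = r})
    (x : EuclideanSpace ℂ (Fin n)) :
    ‖projCLM M x‖ ^ 2 + ‖projCLM N x‖ ^ 2 ≤ (1 + c) * ‖x‖ ^ 2 := by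
  have hbound := dixmier_inner_bound M N c hc hcos
  set a : EuclideanSpace ℂ (Fin n) := projCLM M x with ha
  set b : EuclideanSpace ℂ (Fin n) := projCLM N x with hb
  have haM : a ∈ M := (M.orthogonalProjectionOnto x).2
  have hbN : b ∈ N := (N.orthogonalProjectionOnto x).2
  -- ⟪x, a⟫ real part equals ‖a‖²
  have hxa : (⟪x, a⟫ : ℂ).re = ‖a‖ ^ 2 := by
    have h0 : (⟪x - a, a⟫ : ℂ) = 0 := Submodule.starProjection_inner_eq_zero x a haM
    have heq : (⟪x, a⟫ : ℂ) = ⟪a, a⟫ := by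
      have h2 : (⟪x - a, a⟫ : ℂ) = ⟪x, a⟫ - ⟪a, a⟫ :=
        inner_sub_left (𝕜 := ℂ) x a a
      rw [h0] at h2
      linear_combination -h2
    rw [heq]
    simpa using inner_self_eq_norm_sq (𝕜 := ℂ) a
  have hxb : (⟪x, b⟫ : ℂ).re = ‖b‖ ^ 2 := by
    have h0 : (⟪x - b, b⟫ : ℂ) = 0 := Submodule.starProjection_inner_eq_zero x b hbN
    have heq : (⟪x, b⟫ : ℂ) = ⟪b, b⟫ := by
      have h2 : (⟪x - b, b⟫ : ℂ) = ⟪x, b⟫ - ⟪b, b⟫ :=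
        inner_sub_left (𝕜 := ℂ) x b b
      rw [h0] at h2
      linear_combination -h2
    rw [heq]
    simpa using inner_self_eq_norm_sq (𝕜 := ℂ) b
  set S : ℝ := ‖a‖ ^ 2 + ‖b‖ ^ 2 with hS
  have hS0 : 0 ≤ S := by positivity
  have hSle : S ≤ ‖x‖ * ‖a + b‖ := by
    have h1 : S = (⟪x, a + b⟫ : ℂ).re := by
      rw [inner_add_right, Complex.add_re, hxa, hxb]
    rw [h1]
    exact re_inner_le_norm (𝕜 := ℂ) x (a + b)
  have hab : (⟪a, b⟫ : ℂ).re ≤ c * (‖a‖ * ‖b‖) := by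
    calc (⟪a, b⟫ : ℂ).re ≤ ‖⟪a, b⟫‖ := Complex.re_le_norm _
      _ ≤ c * (‖a‖ * ‖b‖) := hbound a haM b hbN
  have hnormsq : ‖a + b‖ ^ 2 = ‖a‖ ^ 2 + 2 * (⟪a, b⟫ : ℂ).re + ‖b‖ ^ 2 := by
    have := norm_add_sq (𝕜 := ℂ) a b
    simpa using this
  have habs' : ‖⟪a, b⟫‖ = ‖(⟪a, b⟫ : ℂ)‖ := rfl
  have hABsq : ‖a + b‖ ^ 2 ≤ (1 + c) * S := by
    have hamgm : 2 * (‖a‖ * ‖b‖) ≤ ‖a‖ ^ 2 + ‖b‖ ^ 2 := by nlinarith [sq_nonneg (‖a‖ - ‖b‖)]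
    nlinarith
  -- conclude S ≤ (1 + c)‖x‖²
  rcases eq_or_lt_of_le hS0 with hS0' | hS0'
  · rw [← hS0']
    positivity
  · have hsq : S ^ 2 ≤ ‖x‖ ^ 2 * ((1 + c) * S) := by
      have h2 : S ^ 2 ≤ (‖x‖ * ‖a + b‖) ^ 2 := by
        apply pow_le_pow_left₀ hS0 hSle 2
      calc S ^ 2 ≤ (‖x‖ * ‖a + b‖) ^ 2 := h2
        _ = ‖x‖ ^ 2 * ‖a + b‖ ^ 2 := by ring
        _ ≤ ‖x‖ ^ 2 * ((1 + c) * S) := by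
            apply mul_le_mul_of_nonneg_left hABsq (by positivity)
    have := (mul_le_mul_iff_of_pos_right hS0').mp (by nlinarith : S * S ≤ ((1 + c) * ‖x‖ ^ 2) * S)
    linarith

lemma norm_projCLM_orthogonal_sq {n : ℕ} (K : Submodule ℂ (EuclideanSpace ℂ (Fin n)))
    (x : EuclideanSpace ℂ (Fin n)) :
    ‖projCLM K x‖ ^ 2 + ‖projCLM Kᗮ x‖ ^ 2 = ‖x‖ ^ 2 :=
  (Submodule.norm_sq_eq_add_norm_sq_projection x K).symm

/-- If `θ₁` is the Dixmier angle between `M` and `N` and `η₁` that between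
`Mᗮ` and `Nᗮ`, then for all `x ∈ ℂⁿ`:
`2‖x‖² sin²(η₁/2) ≤ ‖P_M x‖² + ‖P_N x‖² ≤ 2‖x‖² cos²(θ₁/2)`. -/
theorem sum_sq_norms_projections_bounds {n : ℕ}
    (M N : Submodule ℂ (EuclideanSpace ℂ (Fin n)))
    (θ₁ η₁ : ℝ) (hθ₁ : θ₁ ∈ Set.Icc 0 (Real.pi / 2)) (hη₁ : η₁ ∈ Set.Icc 0 (Real.pi / 2))
    (hcosθ : Real.cos θ₁ = sSup {r : ℝ | ∃ u ∈ M, ∃ v ∈ N,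
      ‖u‖ = 1 ∧ ‖v‖ = 1 ∧ ‖⟪u, v⟫‖ = r})
    (hcosη : Real.cos η₁ = sSup {r : ℝ | ∃ u ∈ Mᗮ, ∃ v ∈ Nᗮ,
      ‖u‖ = 1 ∧ ‖v‖ = 1 ∧ ‖⟪u, v⟫‖ = r}) :
    ∀ x : EuclideanSpace ℂ (Fin n),
      2 * ‖x‖ ^ 2 * Real.sin (η₁ / 2) ^ 2 ≤ ‖projCLM M x‖ ^ 2 + ‖projCLM N x‖ ^ 2 ∧
      ‖projCLM M x‖ ^ 2 + ‖projCLM N x‖ ^ 2 ≤ 2 * ‖x‖ ^ 2 * Real.cos (θ₁ / 2) ^ 2 := by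
  intro x
  have hcθ : 0 ≤ Real.cos θ₁ :=
    Real.cos_nonneg_of_mem_Icc ⟨by linarith [hθ₁.1, Real.pi_pos.le], hθ₁.2⟩
  have hcη : 0 ≤ Real.cos η₁ :=
    Real.cos_nonneg_of_mem_Icc ⟨by linarith [hη₁.1, Real.pi_pos.le], hη₁.2⟩
  have hupper := sum_sq_le_one_add M N (Real.cos θ₁) hcθ hcosθ x
  have hupper' := sum_sq_le_one_add Mᗮ Nᗮ (Real.cos η₁) hcη hcosη x
  have hM := norm_projCLM_orthogonal_sq M x
  have hN := norm_projCLM_orthogonal_sq N x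
  -- half-angle identities
  have hcos_half : Real.cos (θ₁ / 2) ^ 2 = (1 + Real.cos θ₁) / 2 := by
    have := Real.cos_sq (θ₁ / 2)
    rw [show 2 * (θ₁ / 2) = θ₁ by ring] at this
    linarith
  have hsin_half : Real.sin (η₁ / 2) ^ 2 = (1 - Real.cos η₁) / 2 := by
    have h1 := Real.sin_sq_add_cos_sq (η₁ / 2)
    have := Real.cos_sq (η₁ / 2)
    rw [show 2 * (η₁ / 2) = η₁ by ring] at this
    linarith
  constructor
  · rw [hsin_half]
    nlinarith
  · rw [hcos_half]
    nlinarith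
end

section
/- Let P, Q be orthogonal projections onto subspaces M, N of ℂ^n in generic position with principal vectors u_k, v_k satisfying P v_k = λ_k u_k, Q u_k = λ_k v_k where λ_k = cos θ_k ∈ (0,1), μ_k = sin θ_k. Then (P − Q)(u_k − ((1−μ_k)/λ_k) v_k) = μ_k (u_k − ((1−μ_k)/λ_k) v_k) and (P − Q)(u_k − ((1+μ_k)/λ_k) v_k) = −μ_k (u_k − ((1+μ_k)/λ_k) v_k); i.e., ±μ_k are eigenvalues of P − Q. -/
open scoped ComplexInnerProductSpace

/-- For orthogonal projections `P = P_M`, `Q = P_N` and principal vectors `u, v`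
with angle `θ ∈ (0, π/2)`, `λ = cos θ`, `μ = sin θ`, the vectors
`u - ((1∓μ)/λ) v` are eigenvectors of `P - Q` with eigenvalues `±μ`. -/
theorem eigen_diff_projections {n : ℕ}
    (M N : Submodule ℂ (EuclideanSpace ℂ (Fin n)))
    (hMN : M ⊓ N = ⊥) (hMN' : M ⊓ Nᗮ = ⊥) (hM'N : Mᗮ ⊓ N = ⊥) (hM'N' : Mᗮ ⊓ Nᗮ = ⊥)
    (u v : EuclideanSpace ℂ (Fin n)) (θ : ℝ) (hθ : θ ∈ Set.Ioo 0 (Real.pi / 2))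
    (hu : u ∈ M) (hv : v ∈ N) (hun : ‖u‖ = 1) (hvn : ‖v‖ = 1)
    (huv : ⟪u, v⟫ = (Real.cos θ : ℂ))
    (hPv : projCLM M v = (Real.cos θ : ℂ) • u)
    (hQu : projCLM N u = (Real.cos θ : ℂ) • v) :
    (projCLM M - projCLM N)
        (u - (((1 - Real.sin θ) / Real.cos θ : ℝ) : ℂ) • v) =
      (Real.sin θ : ℂ) • (u - (((1 - Real.sin θ) / Real.cos θ : ℝ) : ℂ) • v) ∧
    (projCLM M - projCLM N)
        (u - (((1 + Real.sin θ) / Real.cos θ : ℝ) : ℂ) • v) =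
      -(Real.sin θ : ℂ) • (u - (((1 + Real.sin θ) / Real.cos θ : ℝ) : ℂ) • v) := by
  obtain ⟨hθ0, hθ2⟩ := hθ
  have hcos : 0 < Real.cos θ := Real.cos_pos_of_mem_Ioo ⟨by linarith [Real.pi_pos], hθ2⟩
  have hpy : Real.sin θ ^ 2 + Real.cos θ ^ 2 = 1 := Real.sin_sq_add_cos_sq θ
  have hcos' : (Real.cos θ : ℂ) ≠ 0 := by exact_mod_cast hcos.ne'
  have hPu : projCLM M u = u := by
    exact (Submodule.starProjection_eq_self_iff (K := M)).2 hu
  have hQv : projCLM N v = v := by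
    exact (Submodule.starProjection_eq_self_iff (K := N)).2 hv
  have hpyC : (Real.sin θ : ℂ) ^ 2 + (Real.cos θ : ℂ) ^ 2 = 1 := by exact_mod_cast hpy
  constructor <;>
  · simp only [ContinuousLinearMap.sub_apply, map_sub, map_smul, hPu, hQv, hPv, hQu]
    have hc2 : Complex.cos (θ : ℂ) ≠ 0 := by
      simpa [Complex.ofReal_cos] using hcos'
    have hp2 : Complex.sin (θ : ℂ) ^ 2 + Complex.cos (θ : ℂ) ^ 2 = 1 :=
      Complex.sin_sq_add_cos_sq _
    match_scalars <;> field_simp <;> first | linear_combination hp2 | linear_combination 2*hp2 | linear_combination -hp2 | ring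
end
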